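/- For all Banach spaces E and F and every S ∈ L(E,F), one has (1/‖ρ_{E*}‖)·‖R(S)‖ ≤ ‖R(S*)‖ ≤ ‖ρ_{F*}‖·‖R(S)‖, where R(S*) ∈ L(F***/F*, E***/E*); in particular, since ‖ρ_{E*}‖ ≤ 2 and ‖ρ_{F*}‖ ≤ 2, it follows that ‖R(S)‖/2 ≤ ‖R(S*)‖ ≤ 2‖R(S)‖. -/

import Mathlib

open NormedSpace Metric Pointwise Filter

noncomputable section

/-- The topological dual of a seminormed space `E` (formerly `NormedSpace.Dual`). -/
abbrev Dual (𝕜 : Type*) [NontriviallyNormedField 𝕜] (E : Type*) [SeminormedAddCommGroup E]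
    [NormedSpace 𝕜 E] : Type _ :=
  E →L[𝕜] 𝕜

variable (𝕜 : Type*) [RCLike 𝕜]

/-- A Banach space over `𝕜`, bundled. -/
structure BanachPkg where
  carrier : Type
  [inst1 : NormedAddCommGroup carrier]
  [inst2 : NormedSpace 𝕜 carrier]
  [inst3 : CompleteSpace carrier]

attribute [instance] BanachPkg.inst1 BanachPkg.inst2 BanachPkg.inst3

variable {𝕜}

section Defs

variable {E F : Type*} [SeminormedAddCommGroup E] [NormedSpace 𝕜 E]
  [SeminormedAddCommGroup F] [NormedSpace 𝕜 F]

/-- A continuous linear operator is weakly compact if the image of the closed unit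
ball is relatively compact in the weak topology. -/
def WCompact (T : E →L[𝕜] F) : Prop :=
  IsCompact (closure ((toWeakSpace 𝕜 F) '' (T '' closedBall 0 1)))

/-- The Banach-space adjoint of a continuous linear operator. -/
def dualOp (S : E →L[𝕜] F) : Dual 𝕜 F →L[𝕜] Dual 𝕜 E :=
  (ContinuousLinearMap.compL 𝕜 E F 𝕜).flip S

@[simp] theorem dualOp_apply (S : E →L[𝕜] F) (f : Dual 𝕜 F) (x : E) :
    dualOp S f x = f (S x) := rfl

/-- The second adjoint `S** : E** → F**`. -/
def bidualOp (S : E →L[𝕜] F) : Dual 𝕜 (Dual 𝕜 E) →L[𝕜] Dual 𝕜 (Dual 𝕜 F) :=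
  dualOp (dualOp S)

end Defs

/-- The bidual of a normed space. -/
abbrev Bidual (𝕜 : Type*) [RCLike 𝕜] (E : Type*) [SeminormedAddCommGroup E]
    [NormedSpace 𝕜 E] : Type _ :=
  Dual 𝕜 (Dual 𝕜 E)

/-- The quotient `E**/E` of the bidual by the canonical image of `E`. -/
abbrev BidualQuot (𝕜 : Type*) [RCLike 𝕜] (E : Type*) [NormedAddCommGroup E]
    [NormedSpace 𝕜 E] : Type _ :=
  Bidual 𝕜 E ⧸ (show @Submodule 𝕜 (Bidual 𝕜 E) _ AddCommGroup.toAddCommMonoid NormedSpace.toModule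
    from LinearMap.range (inclusionInDoubleDual 𝕜 E).toLinearMap)

section Defs3

variable {E F : Type*} [NormedAddCommGroup E] [NormedSpace 𝕜 E]
  [NormedAddCommGroup F] [NormedSpace 𝕜 F]

/-- `RS` is the operator `R(S) : E**/E → F**/F` induced by `S`, i.e. it satisfies
`R(S)(x** + E) = S** x** + F`  (`R(S) = 0` iff `S` is weakly compact). -/
def IsRRep (S : E →L[𝕜] F) (RS : BidualQuot 𝕜 E →L[𝕜] BidualQuot 𝕜 F) : Prop :=
  ∀ u : Bidual 𝕜 E,
    RS (Submodule.Quotient.mk u) = Submodule.Quotient.mk (bidualOp S u)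

end Defs3

variable (E : Type*) [NormedAddCommGroup E] [NormedSpace ℝ E]

/-- The canonical projection `π_{E*} : E*** → E***` onto (the canonical image of) `E*`,
sending `u` to `u|_E` regarded again as an element of `E***`. -/
def piStar : Dual ℝ (Bidual ℝ E) →L[ℝ] Dual ℝ (Bidual ℝ E) :=
  (inclusionInDoubleDual ℝ (Dual ℝ E)).comp (dualOp (inclusionInDoubleDual ℝ E))

/-- `ρ_{E*} = Id_{E***} - π_{E*}`. -/
def rhoStar : Dual ℝ (Bidual ℝ E) →L[ℝ] Dual ℝ (Bidual ℝ E) :=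
  ContinuousLinearMap.id ℝ _ - piStar E

variable {E}


section AuxLemmas

theorem vanish_norm_le {M N : Type*} [SeminormedAddCommGroup M] [NormedSpace ℝ M]
    [SeminormedAddCommGroup N] [NormedSpace ℝ N]
    (w : M →L[ℝ] N) (p : Submodule ℝ M) (h : ∀ x ∈ p, w x = 0) (y : M) :
    ‖w y‖ ≤ ‖w‖ * ‖(Submodule.Quotient.mk y : M ⧸ p)‖ := by
  refine le_of_forall_pos_le_add fun ε hε => ?_
  obtain ⟨m, hm, hlt⟩ := Submodule.Quotient.norm_mk_lt
      (Submodule.Quotient.mk y : M ⧸ p) (show 0 < ε / (‖w‖ + 1) by positivity)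
  have hmy : w m = w y := by
    have hp : m - y ∈ p := (Submodule.Quotient.eq p).mp hm
    have h2 := h _ hp
    rw [map_sub, sub_eq_zero] at h2
    exact h2
  have hw0 : (0:ℝ) ≤ ‖w‖ := norm_nonneg _
  calc ‖w y‖ = ‖w m‖ := by rw [hmy]
    _ ≤ ‖w‖ * ‖m‖ := w.le_opNorm m
    _ ≤ ‖w‖ * (‖(Submodule.Quotient.mk y : M ⧸ p)‖ + ε / (‖w‖ + 1)) := by
        have := hlt.le
        gcongr
    _ ≤ ‖w‖ * ‖(Submodule.Quotient.mk y : M ⧸ p)‖ + ε := by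
        rw [mul_add]
        have hle : ‖w‖ * (ε / (‖w‖ + 1)) ≤ ε := by
          rw [div_eq_inv_mul, ← mul_assoc]
          have h1 : ‖w‖ * (‖w‖ + 1)⁻¹ ≤ 1 := by
            rw [mul_inv_le_iff₀ (by positivity)]
            linarith
          nlinarith
        linarith

/-- The quotient map as a continuous linear map. -/
def mkCLM {M : Type*} [SeminormedAddCommGroup M] [NormedSpace ℝ M] (p : Submodule ℝ M) :
    M →L[ℝ] M ⧸ p :=
  LinearMap.mkContinuous p.mkQ 1 fun x => by
    simpa using Submodule.Quotient.norm_mk_le p x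

@[simp] theorem mkCLM_apply {M : Type*} [SeminormedAddCommGroup M] [NormedSpace ℝ M]
    (p : Submodule ℝ M) (x : M) : mkCLM p x = Submodule.Quotient.mk x := rfl

theorem mkCLM_norm_le {M : Type*} [SeminormedAddCommGroup M] [NormedSpace ℝ M]
    (p : Submodule ℝ M) : ‖mkCLM p‖ ≤ 1 :=
  LinearMap.mkContinuous_norm_le _ zero_le_one _

section RhoFacts

variable {G : Type*} [NormedAddCommGroup G] [NormedSpace ℝ G]

theorem rhoStar_incl_dual (g : Dual ℝ G) :
    rhoStar G (inclusionInDoubleDual ℝ (Dual ℝ G) g) = 0 := by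
  have hg : (dualOp (inclusionInDoubleDual ℝ G)) ((inclusionInDoubleDual ℝ (Dual ℝ G)) g) = g := by
    ext y; simp [NormedSpace.dual_def]
  ext x
  simp [rhoStar, piStar, NormedSpace.dual_def, hg]

theorem rhoStar_apply_incl (u : Dual ℝ (Bidual ℝ G)) (x : G) :
    (rhoStar G u) (inclusionInDoubleDual ℝ G x) = 0 := by
  simp [rhoStar, piStar, NormedSpace.dual_def]

theorem norm_rhoStar_le : ‖rhoStar G‖ ≤ 2 := by
  have h1 : ‖piStar G‖ ≤ 1 := by
    have hd : ‖(dualOp (inclusionInDoubleDual ℝ G) : Dual ℝ (Bidual ℝ G) →L[ℝ] Dual ℝ G)‖ ≤ 1 := by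
      refine ContinuousLinearMap.opNorm_le_bound _ zero_le_one fun g => ?_
      calc ‖(dualOp (inclusionInDoubleDual ℝ G) : Dual ℝ (Bidual ℝ G) →L[ℝ] Dual ℝ G) g‖ = ‖g.comp (inclusionInDoubleDual ℝ G)‖ := rfl
        _ ≤ ‖g‖ * ‖(show G →L[ℝ] Bidual ℝ G from inclusionInDoubleDual ℝ G)‖ := g.opNorm_comp_le _
        _ ≤ ‖g‖ * 1 := by gcongr; exact inclusionInDoubleDual_norm_le ℝ G
        _ = 1 * ‖g‖ := by ring
    calc ‖piStar G‖ ≤ ‖(show Dual ℝ G →L[ℝ] Bidual ℝ (Dual ℝ G) from inclusionInDoubleDual ℝ (Dual ℝ G))‖ * ‖(dualOp (inclusionInDoubleDual ℝ G) : Dual ℝ (Bidual ℝ G) →L[ℝ] Dual ℝ G)‖ :=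
          ContinuousLinearMap.opNorm_comp_le _ _
      _ ≤ 1 * 1 := mul_le_mul (inclusionInDoubleDual_norm_le ℝ (Dual ℝ G)) hd
            (ContinuousLinearMap.opNorm_nonneg _) zero_le_one
      _ = 1 := by ring
  calc ‖rhoStar G‖ ≤ ‖ContinuousLinearMap.id ℝ (Dual ℝ (Bidual ℝ G))‖ + ‖piStar G‖ :=
        norm_sub_le (ContinuousLinearMap.id ℝ (Dual ℝ (Bidual ℝ G))) (piStar G)
    _ ≤ 1 + 1 := add_le_add ContinuousLinearMap.norm_id_le h1
    _ = 2 := by norm_num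

theorem isClosed_range_incl [CompleteSpace G] :
    IsClosed ((LinearMap.range (inclusionInDoubleDual ℝ G).toLinearMap :
      Submodule ℝ (Bidual ℝ G)) : Set (Bidual ℝ G)) := by
  have h : Isometry (inclusionInDoubleDual ℝ G) := (inclusionInDoubleDualLi ℝ (E := G)).isometry
  simpa [LinearMap.coe_range] using h.isClosedEmbedding.isClosed_range

theorem exists_dual_vector_semi {X : Type*} [SeminormedAddCommGroup X] [NormedSpace ℝ X]
    (x : X) : ∃ g : X →L[ℝ] ℝ, ‖g‖ ≤ 1 ∧ g x = ‖x‖ := by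
  by_cases hx : ‖x‖ = 0
  · exact ⟨0, by simp, by simp [hx]⟩
  · have hne : x ≠ 0 := fun h => hx (by simp [h])
    set l : (ℝ ∙ x) →ₗ[ℝ] ℝ := ‖x‖ • (LinearEquiv.coord ℝ X x hne).toLinearMap with hl
    have hbound : ∀ y : (ℝ ∙ x), ‖l y‖ ≤ 1 * ‖y‖ := by
      intro y
      have h1 : (LinearEquiv.coord ℝ X x hne) y • x = (y : X) :=
        LinearEquiv.coord_apply_smul ℝ X x hne y
      have h2 : ‖l y‖ = ‖(LinearEquiv.coord ℝ X x hne) y • x‖ := by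
        rw [hl, norm_smul]
        simp only [LinearMap.smul_apply, LinearEquiv.coe_coe, smul_eq_mul, Real.norm_eq_abs,
          abs_mul, abs_of_nonneg (norm_nonneg x), norm_smul]
        ring
      rw [h2, h1, one_mul]
      rfl
    set f : (ℝ ∙ x) →L[ℝ] ℝ := LinearMap.mkContinuous l 1 hbound with hf
    obtain ⟨g, hg1, hg2⟩ := exists_extension_norm_eq (ℝ ∙ x) f
    refine ⟨g, ?_, ?_⟩
    · rw [hg2]
      exact LinearMap.mkContinuous_norm_le _ zero_le_one _
    · have hmem : x ∈ ℝ ∙ x := Submodule.mem_span_singleton_self x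
      have hgx := hg1 ⟨x, hmem⟩
      rw [show ((⟨x, hmem⟩ : ℝ ∙ x) : X) = x from rfl] at hgx
      rw [hgx]
      show l ⟨x, hmem⟩ = ‖x‖
      rw [hl]
      simp [LinearEquiv.coord_self]

end RhoFacts

end AuxLemmas

set_option maxHeartbeats 2000000

/-- For all Banach spaces `E`, `F` and `S ∈ L(E,F)`:
`(1/‖ρ_{E*}‖)·‖R(S)‖ ≤ ‖R(S*)‖ ≤ ‖ρ_{F*}‖·‖R(S)‖`, and in particular
`‖R(S)‖/2 ≤ ‖R(S*)‖ ≤ 2·‖R(S)‖`. -/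
theorem norm_RRep_dual_bounds
    {F : Type*} [NormedAddCommGroup F] [NormedSpace ℝ F]
    [CompleteSpace E] [CompleteSpace F]
    (S : E →L[ℝ] F)
    (RS : BidualQuot ℝ E →L[ℝ] BidualQuot ℝ F) (hRS : IsRRep S RS)
    (RSd : BidualQuot ℝ (Dual ℝ F) →L[ℝ] BidualQuot ℝ (Dual ℝ E))
    (hRSd : IsRRep (dualOp S) RSd) :
    (1 / ‖rhoStar E‖) * ‖RS‖ ≤ ‖RSd‖ ∧ ‖RSd‖ ≤ ‖rhoStar F‖ * ‖RS‖ ∧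
    ‖RS‖ / 2 ≤ ‖RSd‖ ∧ ‖RSd‖ ≤ 2 * ‖RS‖ := by
  -- Part A : ‖RSd‖ ≤ ‖ρ_{F*}‖ * ‖RS‖
  have hA : ‖RSd‖ ≤ ‖rhoStar F‖ * ‖RS‖ := by
    refine ContinuousLinearMap.opNorm_le_bound _ (by positivity) fun q => ?_
    obtain ⟨v, rfl⟩ := Submodule.Quotient.mk_surjective _ q
    rw [hRSd v]
    have hmkeq : (Submodule.Quotient.mk (bidualOp (dualOp S) v) :
        BidualQuot ℝ (Dual ℝ E)) =
        Submodule.Quotient.mk (bidualOp (dualOp S) (rhoStar F v)) := by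
      rw [Submodule.Quotient.eq]
      have h1 : v - rhoStar F v = piStar F v := by
        simp [rhoStar]
      have h2 : bidualOp (dualOp S) v - bidualOp (dualOp S) (rhoStar F v)
          = bidualOp (dualOp S) (piStar F v) := by
        rw [← map_sub, h1]
      refine LinearMap.mem_range.mpr
        ⟨dualOp S (dualOp (inclusionInDoubleDual ℝ F) v), ?_⟩
      rw [h2]
      rfl
    rw [hmkeq]
    have hTnorm : ‖bidualOp (dualOp S) (rhoStar F v)‖ ≤ ‖rhoStar F v‖ * ‖RS‖ := by
      refine ContinuousLinearMap.opNorm_le_bound _ (by positivity) fun x => ?_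
      have e1 : (bidualOp (dualOp S) (rhoStar F v)) x = (rhoStar F v) (bidualOp S x) := rfl
      rw [e1]
      calc ‖(rhoStar F v) (bidualOp S x)‖
          ≤ ‖rhoStar F v‖ * ‖(Submodule.Quotient.mk (bidualOp S x) : BidualQuot ℝ F)‖ := by
            refine vanish_norm_le _ _ ?_ _
            rintro y ⟨z, rfl⟩
            exact rhoStar_apply_incl v z
        _ = ‖rhoStar F v‖ * ‖RS (Submodule.Quotient.mk x)‖ := by rw [← hRS x]
        _ ≤ ‖rhoStar F v‖ * (‖RS‖ * ‖(Submodule.Quotient.mk x : BidualQuot ℝ E)‖) := by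
            gcongr
            exact RS.le_opNorm _
        _ ≤ ‖rhoStar F v‖ * (‖RS‖ * ‖x‖) := by
            gcongr
            exact Submodule.Quotient.norm_mk_le _ x
        _ = ‖rhoStar F v‖ * ‖RS‖ * ‖x‖ := by ring
    have hrv : ‖rhoStar F v‖ ≤ ‖rhoStar F‖ *
        ‖(Submodule.Quotient.mk v : BidualQuot ℝ (Dual ℝ F))‖ := by
      refine vanish_norm_le _ _ ?_ _
      rintro y ⟨g, rfl⟩
      exact rhoStar_incl_dual g
    calc ‖(Submodule.Quotient.mk (bidualOp (dualOp S) (rhoStar F v)) :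
          BidualQuot ℝ (Dual ℝ E))‖
        ≤ ‖bidualOp (dualOp S) (rhoStar F v)‖ := Submodule.Quotient.norm_mk_le _ _
      _ ≤ ‖rhoStar F v‖ * ‖RS‖ := hTnorm
      _ ≤ (‖rhoStar F‖ * ‖(Submodule.Quotient.mk v : BidualQuot ℝ (Dual ℝ F))‖) * ‖RS‖ := by
          gcongr
      _ = ‖rhoStar F‖ * ‖RS‖ * ‖(Submodule.Quotient.mk v : BidualQuot ℝ (Dual ℝ F))‖ := by ring
  -- Part B : ‖RS‖ ≤ ‖ρ_{E*}‖ * ‖RSd‖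
  have hB : ‖RS‖ ≤ ‖rhoStar E‖ * ‖RSd‖ := by
    refine ContinuousLinearMap.opNorm_le_bound _ (by positivity) fun q => ?_
    obtain ⟨x, rfl⟩ := Submodule.Quotient.mk_surjective _ q
    obtain ⟨ψ, hψ1, hψ2'⟩ := exists_dual_vector_semi (RS (Submodule.Quotient.mk x))
    set w : Dual ℝ (Bidual ℝ F) := ψ.comp (mkCLM _) with hw
    have hw0 : ∀ y : F, w (inclusionInDoubleDual ℝ F y) = 0 := by
      intro y
      have hz : (Submodule.Quotient.mk (inclusionInDoubleDual ℝ F y) : BidualQuot ℝ F) = 0 :=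
        (Submodule.Quotient.mk_eq_zero _).mpr (LinearMap.mem_range.mpr ⟨y, rfl⟩)
      have e : w (inclusionInDoubleDual ℝ F y)
          = ψ ((Submodule.Quotient.mk (inclusionInDoubleDual ℝ F y) : BidualQuot ℝ F)) := rfl
      rw [e, hz, map_zero]
    have hwnorm : ‖w‖ ≤ 1 := by
      calc ‖w‖ ≤ ‖ψ‖ * ‖mkCLM _‖ :=
            ψ.opNorm_comp_le _
        _ ≤ 1 * 1 := mul_le_mul hψ1 (mkCLM_norm_le _) (ContinuousLinearMap.opNorm_nonneg _) zero_le_one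
        _ = 1 := one_mul 1
    set u0 : Dual ℝ (Bidual ℝ E) := bidualOp (dualOp S) w with hu0
    have hpi : piStar E u0 = 0 := by
      have hz : dualOp (inclusionInDoubleDual ℝ E) u0 = 0 := by
        ext y
        have e : (dualOp (inclusionInDoubleDual ℝ E) u0) y
            = w (inclusionInDoubleDual ℝ F (S y)) := rfl
        rw [e, hw0 (S y)]
        rfl
      show inclusionInDoubleDual ℝ (Dual ℝ E) (dualOp (inclusionInDoubleDual ℝ E) u0) = 0
      rw [hz, map_zero]
    have hrho : rhoStar E u0 = u0 := by
      simp [rhoStar, hpi]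
    have key : ψ (RS (Submodule.Quotient.mk x)) = u0 x := by
      rw [hRS x]
      rfl
    have hb1 : ‖(rhoStar E u0) x‖ ≤ ‖rhoStar E u0‖ *
        ‖(Submodule.Quotient.mk x : BidualQuot ℝ E)‖ := by
      refine vanish_norm_le _ _ ?_ _
      rintro y ⟨z, rfl⟩
      exact rhoStar_apply_incl u0 z
    have hb2 : ‖rhoStar E u0‖ ≤ ‖rhoStar E‖ *
        ‖(Submodule.Quotient.mk u0 : BidualQuot ℝ (Dual ℝ E))‖ := by
      refine vanish_norm_le _ _ ?_ _
      rintro y ⟨g, rfl⟩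
      exact rhoStar_incl_dual g
    have hb3 : (Submodule.Quotient.mk u0 : BidualQuot ℝ (Dual ℝ E))
        = RSd (Submodule.Quotient.mk w) := (hRSd w).symm
    have hb4 : ‖RSd (Submodule.Quotient.mk w)‖ ≤ ‖RSd‖ := by
      calc ‖RSd (Submodule.Quotient.mk w)‖
          ≤ ‖RSd‖ * ‖(Submodule.Quotient.mk w : BidualQuot ℝ (Dual ℝ F))‖ := RSd.le_opNorm _
        _ ≤ ‖RSd‖ * ‖w‖ := by gcongr; exact Submodule.Quotient.norm_mk_le _ w
        _ ≤ ‖RSd‖ * 1 := by gcongr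
        _ = ‖RSd‖ := mul_one _
    have hfinal : ‖RS (Submodule.Quotient.mk x)‖ ≤ ‖(rhoStar E u0) x‖ := by
      rw [hrho, ← key, hψ2']
      rw [Real.norm_eq_abs]
      exact le_abs_self _
    calc ‖RS (Submodule.Quotient.mk x)‖ ≤ ‖(rhoStar E u0) x‖ := hfinal
      _ ≤ ‖rhoStar E u0‖ * ‖(Submodule.Quotient.mk x : BidualQuot ℝ E)‖ := hb1
      _ ≤ (‖rhoStar E‖ * ‖RSd‖) * ‖(Submodule.Quotient.mk x : BidualQuot ℝ E)‖ := by
          have h5 : ‖rhoStar E u0‖ ≤ ‖rhoStar E‖ * ‖RSd‖ := by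
            rw [hb3] at hb2
            calc ‖rhoStar E u0‖ ≤ ‖rhoStar E‖ * ‖RSd (Submodule.Quotient.mk w)‖ := hb2
              _ ≤ ‖rhoStar E‖ * ‖RSd‖ := by gcongr
          exact mul_le_mul_of_nonneg_right h5 (norm_nonneg _)
  -- Assemble the four conclusions
  have hρE : ‖rhoStar E‖ ≤ 2 := norm_rhoStar_le
  have hρF : ‖rhoStar F‖ ≤ 2 := norm_rhoStar_le
  have h4 : ‖RSd‖ ≤ 2 * ‖RS‖ :=
    hA.trans (mul_le_mul_of_nonneg_right hρF (ContinuousLinearMap.opNorm_nonneg RS))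
  have h3 : ‖RS‖ / 2 ≤ ‖RSd‖ := by
    have h := hB.trans (mul_le_mul_of_nonneg_right hρE (ContinuousLinearMap.opNorm_nonneg RSd))
    linarith
  have h1 : (1 / ‖rhoStar E‖) * ‖RS‖ ≤ ‖RSd‖ := by
    rcases eq_or_lt_of_le (norm_nonneg (rhoStar E)) with h0 | h0
    · rw [← h0, div_zero, zero_mul]
      exact ContinuousLinearMap.opNorm_nonneg RSd
    · rw [one_div, inv_mul_eq_div, div_le_iff₀ h0]
      exact hB.trans_eq (mul_comm _ _)
  exact ⟨h1, hA, h3, h4⟩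

end
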